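/- Let P ⊂ R^n be an n-dimensional rational polytope with 0 ∈ P. Then the minimal periods of the coefficient functions Q_i(P,·) are weakly decreasing in i: if d is a period of Q_i(P,·) then d is a period of Q_{i+1}(P,·), for i = 0,...,n-1. -/

import Mathlib

open Pointwise

/-- A point of `ℚⁿ` is a lattice point if all its coordinates are integers. -/
def IsLatticePt {n : ℕ} (x : Fin n → ℚ) : Prop := ∀ i, ∃ z : ℤ, x i = (z : ℚ)

/-- The number of lattice points in the dilate `r • P`. -/
noncomputable def latticeCount {n : ℕ} (P : Set (Fin n → ℚ)) (r : ℚ) : ℕ :=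
  Set.ncard {x | x ∈ r • P ∧ IsLatticePt x}

/-- A rational polytope: the convex hull of finitely many rational points. -/
def IsRatPolytope {n : ℕ} (P : Set (Fin n → ℚ)) : Prop :=
  ∃ V : Finset (Fin n → ℚ), P = convexHull ℚ (V : Set (Fin n → ℚ))

/-- The dimension of a set, as the dimension of its affine hull. -/
noncomputable def polyDim {n : ℕ} (P : Set (Fin n → ℚ)) : ℕ :=
  Module.finrank ℚ (vectorSpan ℚ P)

/-- `F` is a face of the polytope `P`. -/
def IsFace {n : ℕ} (P F : Set (Fin n → ℚ)) : Prop :=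
  F = P ∨ ∃ (f : (Fin n → ℚ) →ₗ[ℚ] ℚ) (c : ℚ),
    (∀ x ∈ P, f x ≤ c) ∧ F = {x | x ∈ P ∧ f x = c}

/-- `F` is an `i`-dimensional (nonempty) face of `P`. -/
def IsIFace {n : ℕ} (P F : Set (Fin n → ℚ)) (i : ℕ) : Prop :=
  IsFace P F ∧ F.Nonempty ∧ polyDim F = i

/-- The dilated affine hull `r • aff(F)` contains a lattice point. -/
def DilAffHasLattice {n : ℕ} (F : Set (Fin n → ℚ)) (r : ℚ) : Prop :=
  ∃ x ∈ r • (affineSpan ℚ F : Set (Fin n → ℚ)), IsLatticePt x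

/-- `k` is the `i`-index `d_i(P)`: the smallest positive integer such that
`k • aff(F)` contains a lattice point for every `i`-face `F` of `P`. -/
def IsIIndex {n : ℕ} (P : Set (Fin n → ℚ)) (i : ℕ) (k : ℕ) : Prop :=
  0 < k ∧ (∀ F, IsIFace P F i → DilAffHasLattice F (k : ℚ)) ∧
    ∀ k' : ℕ, 0 < k' → (∀ F, IsIFace P F i → DilAffHasLattice F (k' : ℚ)) → k ≤ k'

/-- `q` is the rational `i`-index `rd_i(P)`: the smallest positive rational such that
`q • aff(F)` contains a lattice point for every `i`-face `F` of `P`. -/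
def IsRatIIndex {n : ℕ} (P : Set (Fin n → ℚ)) (i : ℕ) (q : ℚ) : Prop :=
  0 < q ∧ (∀ F, IsIFace P F i → DilAffHasLattice F q) ∧
    ∀ q' : ℚ, 0 < q' → (∀ F, IsIFace P F i → DilAffHasLattice F q') → q ≤ q'

/-- An integral polytope: the convex hull of finitely many lattice points. -/
def IsIntegralPolytope {n : ℕ} (P : Set (Fin n → ℚ)) : Prop :=
  ∃ V : Finset (Fin n → ℚ), (∀ v ∈ V, IsLatticePt v) ∧
    P = convexHull ℚ (V : Set (Fin n → ℚ))

/-- `q` is the rational denominator `q(P)`: the smallest positive rational such that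
`q • P` is an integral polytope. -/
def IsRatDenom {n : ℕ} (P : Set (Fin n → ℚ)) (q : ℚ) : Prop :=
  0 < q ∧ IsIntegralPolytope (q • P) ∧
    ∀ q' : ℚ, 0 < q' → IsIntegralPolytope (q' • P) → q ≤ q'

/-- `f` is periodic with period `d`. -/
def IsPeriodic (f : ℚ → ℚ) (d : ℚ) : Prop := ∀ r, f (r + d) = f r

/-- `Q` is a family of coefficient functions of the rational Ehrhart quasi-polynomial
of `P` (of degree `d`): each `Q i` is periodic with some positive period and
`#(rP ∩ ℤⁿ) = ∑_{i=0}^{d} Q_i(P,r) rⁱ` for all rational `r ≥ 0`. -/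
def IsRatEhrhartCoeffs {n : ℕ} (P : Set (Fin n → ℚ)) (d : ℕ) (Q : ℕ → ℚ → ℚ) : Prop :=
  (∀ i, ∃ p : ℚ, 0 < p ∧ IsPeriodic (Q i) p) ∧
  ∀ r : ℚ, 0 ≤ r → (latticeCount P r : ℚ) = ∑ i ∈ Finset.range (d + 1), Q i r * r ^ i

/-- `G` is the family of coefficient functions of the classical Ehrhart quasi-polynomial
of `P` (of degree `d`): each `G i` is periodic with some positive integer period and
`#(kP ∩ ℤⁿ) = ∑_{i=0}^{d} G_i(P,k) kⁱ` for all integers `k ≥ 0`. -/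
def IsEhrhartCoeffs {n : ℕ} (P : Set (Fin n → ℚ)) (d : ℕ) (G : ℕ → ℕ → ℚ) : Prop :=
  (∀ i, ∃ p : ℕ, 0 < p ∧ ∀ k, G i (k + p) = G i k) ∧
  ∀ k : ℕ, (latticeCount P (k : ℚ) : ℚ) = ∑ i ∈ Finset.range (d + 1), G i k * (k : ℚ) ^ i

namespace Stmt19Aux

open Polynomial

variable {n : ℕ}

lemma periodic_nat_mul {f : ℚ → ℚ} {c : ℚ} (h : IsPeriodic f c) (m : ℕ) (r : ℚ) :
    f (r + m * c) = f r := by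
  induction m with
  | zero => simp
  | succ k ih =>
    have h1 : r + ((k : ℚ) + 1) * c = (r + k * c) + c := by ring
    push_cast
    rw [h1, h (r + k * c), ih]

lemma periodic_num_mul {f : ℚ → ℚ} {p q : ℚ} (hp : 0 < p) (hq : 0 < q)
    (h : IsPeriodic f p) : IsPeriodic f ((p.num * q.num : ℤ) : ℚ) := by
  intro r
  have hd : ((p.den : ℚ)) * p = p.num := by
    have hden : ((p.den : ℚ)) ≠ 0 := by exact_mod_cast p.den_nz
    rw [mul_comm, ← eq_div_iff hden]
    exact (Rat.num_div_den p).symm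
  have h1 : ((p.num * q.num : ℤ) : ℚ) = ((q.num.toNat * p.den : ℕ) : ℚ) * p := by
    have h2 : ((q.num.toNat : ℤ)) = q.num := Int.toNat_of_nonneg (le_of_lt (Rat.num_pos.2 hq))
    have h3 : ((q.num.toNat : ℕ) : ℚ) = (q.num : ℚ) := by exact_mod_cast h2
    push_cast [h3]
    rw [mul_assoc, hd]; ring
  rw [h1]
  exact periodic_nat_mul h _ r

lemma common_period {Q : ℕ → ℚ → ℚ} (h : ∀ i, ∃ p : ℚ, 0 < p ∧ IsPeriodic (Q i) p) (n : ℕ) :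
    ∃ p : ℚ, 0 < p ∧ ∀ j ≤ n, IsPeriodic (Q j) p := by
  induction n with
  | zero =>
    obtain ⟨p, hp, hper⟩ := h 0
    exact ⟨p, hp, fun j hj => by rwa [Nat.le_zero.mp hj]⟩
  | succ k ih =>
    obtain ⟨p, hp, hper⟩ := ih
    obtain ⟨q, hq, hqper⟩ := h (k + 1)
    have hpq : (0 : ℚ) < ((p.num * q.num : ℤ) : ℚ) := by
      have := Rat.num_pos.2 hp; have := Rat.num_pos.2 hq
      push_cast; positivity
    refine ⟨((p.num * q.num : ℤ) : ℚ), hpq, fun j hj => ?_⟩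
    rcases Nat.lt_succ_iff_lt_or_eq.mp (Nat.lt_succ_of_le hj) with hj' | hj'
    · exact periodic_num_mul hp hq (hper j (Nat.lt_succ_iff.mp hj'))
    · subst hj'
      have : ((p.num * q.num : ℤ) : ℚ) = ((q.num * p.num : ℤ) : ℚ) := by push_cast; ring
      rw [this]
      exact periodic_num_mul hq hp hqper


lemma bounded_of_ratPolytope {n : ℕ} {P : Set (Fin n → ℚ)} (hP : IsRatPolytope P) :
    ∃ M : ℚ, 0 ≤ M ∧ ∀ x ∈ P, ∀ i, |x i| ≤ M := by
  classical
  obtain ⟨V, rfl⟩ := hP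
  have hM0 : (0:ℚ) ≤ ∑ v ∈ V, ∑ i, |v i| :=
    Finset.sum_nonneg fun v _ => Finset.sum_nonneg fun i _ => abs_nonneg _
  refine ⟨∑ v ∈ V, ∑ i, |v i|, hM0, ?_⟩
  have hsub : (V : Set (Fin n → ℚ)) ⊆ {x | ∀ i, |x i| ≤ ∑ v ∈ V, ∑ j, |v j|} := by
    intro v hv
    have hv' : v ∈ V := hv
    simp only [Set.mem_setOf_eq]
    intro i
    calc |v i| ≤ ∑ j, |v j| :=
          Finset.single_le_sum (f := fun j => |v j|) (fun j _ => abs_nonneg _) (Finset.mem_univ i)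
      _ ≤ ∑ w ∈ V, ∑ j, |w j| := by
          have h := Finset.sum_le_sum_of_subset_of_nonneg
              (f := fun w : Fin n → ℚ => ∑ j, |w j|)
              (Finset.singleton_subset_iff.mpr hv')
              (fun w _ _ => Finset.sum_nonneg fun j _ => abs_nonneg (w j))
          simpa using h
  have hconv : Convex ℚ {x : Fin n → ℚ | ∀ i, |x i| ≤ ∑ v ∈ V, ∑ j, |v j|} := by
    intro x hx y hy a b ha hb hab
    simp only [Set.mem_setOf_eq] at hx hy ⊢
    intro i
    have hxy : (a • x + b • y) i = a * x i + b * y i := by simp [smul_eq_mul]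
    rw [hxy]
    calc |a * x i + b * y i| ≤ |a * x i| + |b * y i| := abs_add_le _ _
      _ = a * |x i| + b * |y i| := by rw [abs_mul, abs_mul, abs_of_nonneg ha, abs_of_nonneg hb]
      _ ≤ a * (∑ v ∈ V, ∑ j, |v j|) + b * (∑ v ∈ V, ∑ j, |v j|) := by
          gcongr
          exacts [hx i, hy i]
      _ = ∑ v ∈ V, ∑ j, |v j| := by rw [← add_mul, hab, one_mul]
  exact fun x hx i => convexHull_min hsub hconv hx i

lemma mem_dilate_mono {n : ℕ} {P : Set (Fin n → ℚ)} (hconv : Convex ℚ P)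
    (h0 : (0 : Fin n → ℚ) ∈ P) {s t : ℚ} (hs : 0 ≤ s) (hst : s ≤ t)
    {x : Fin n → ℚ} (hx : x ∈ s • P) : x ∈ t • P := by
  rcases eq_or_lt_of_le (hs.trans hst) with ht | ht
  · have hs0 : s = 0 := le_antisymm (hst.trans ht.symm.le) hs
    rw [← ht, ← hs0]; exact hx
  · obtain ⟨y, hy, rfl⟩ := hx
    refine ⟨(s / t) • y, ?_, ?_⟩
    · exact hconv.smul_mem_of_zero_mem h0 hy
        ⟨div_nonneg hs ht.le, by rw [div_le_one ht]; exact hst⟩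
    · show t • ((s / t) • y) = s • y
      rw [smul_smul, mul_div_cancel₀ _ (ne_of_gt ht)]

lemma mem_zero_dilate {n : ℕ} {P : Set (Fin n → ℚ)} (h0 : (0 : Fin n → ℚ) ∈ P)
    {x : Fin n → ℚ} (hx : x ∈ (0 : ℚ) • P) : x = 0 := by
  rw [Set.zero_smul_set ⟨0, h0⟩] at hx
  simpa using hx

lemma lattice_finite {n : ℕ} {P : Set (Fin n → ℚ)} {M : ℚ}
    (hM : ∀ x ∈ P, ∀ i, |x i| ≤ M) (s : ℚ) :
    {x | x ∈ s • P ∧ IsLatticePt x}.Finite := by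
  classical
  set B : ℤ := ⌈|s| * M⌉ with hB
  have hfin : (Set.pi Set.univ (fun _ : Fin n => Set.Icc (-B) B)).Finite :=
    Set.Finite.pi fun _ => Set.finite_Icc _ _
  refine Set.Finite.subset (hfin.image (fun z : Fin n → ℤ => fun i => ((z i : ℚ)))) ?_
  rintro x ⟨hxP, hlat⟩
  obtain ⟨y, hy, rfl⟩ := hxP
  set x := s • y with hx
  have hbound : ∀ i, |x i| ≤ |s| * M := by
    intro i
    have : x i = s * y i := by simp [hx, smul_eq_mul]
    rw [this, abs_mul]
    have h1 : |y i| ≤ M := hM y hy i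
    have h2 : (0:ℚ) ≤ M := le_trans (abs_nonneg _) h1
    exact mul_le_mul_of_nonneg_left h1 (abs_nonneg s)
  refine ⟨fun i => (hlat i).choose, ?_, ?_⟩
  · intro i _
    have hzi : x i = ((hlat i).choose : ℚ) := (hlat i).choose_spec
    have hle : |((hlat i).choose : ℚ)| ≤ (B : ℚ) := by
      rw [← hzi]; exact (hbound i).trans (Int.le_ceil _)
    rw [abs_le] at hle
    constructor
    · exact_mod_cast hle.1
    · exact_mod_cast hle.2
  · funext i
    exact ((hlat i).choose_spec).symm


lemma weights_unique {K : Finset (Fin n → ℚ)}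
    (hKai : AffineIndependent ℚ ((↑) : K → (Fin n → ℚ)))
    {a b : (Fin n → ℚ) → ℚ} (ha1 : ∑ x ∈ K, a x = 1) (hb1 : ∑ x ∈ K, b x = 1)
    (hab : ∑ x ∈ K, a x • x = ∑ x ∈ K, b x • x) : ∀ x ∈ K, a x = b x := by
  classical
  have haU : ∑ i : K, a ↑i = 1 := by rw [Finset.sum_coe_sort]; exact ha1
  have hbU : ∑ i : K, b ↑i = 1 := by rw [Finset.sum_coe_sort]; exact hb1
  have hcomb :
      Finset.univ.affineCombination ℚ ((↑) : K → (Fin n → ℚ)) (fun i => a ↑i) =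
      Finset.univ.affineCombination ℚ ((↑) : K → (Fin n → ℚ)) (fun i => b ↑i) := by
    rw [affineCombination_eq_centerMass haU, affineCombination_eq_centerMass hbU,
      Finset.centerMass_eq_of_sum_1 _ _ haU, Finset.centerMass_eq_of_sum_1 _ _ hbU]
    calc (∑ i : K, a ↑i • (i : Fin n → ℚ)) = ∑ x ∈ K, a x • x := by
          rw [Finset.sum_coe_sort (f := fun x => a x • x)]
      _ = ∑ x ∈ K, b x • x := hab
      _ = ∑ i : K, b ↑i • (i : Fin n → ℚ) := by
          rw [Finset.sum_coe_sort (f := fun x => b x • x)]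
  have hind := hKai.indicator_eq_of_affineCombination_eq Finset.univ Finset.univ _ _ haU hbU hcomb
  intro x hx
  have := congrFun hind ⟨x, hx⟩
  simpa using this

lemma mem_of_ray (V : Finset (Fin n → ℚ)) (y : Fin n → ℚ) {t0 : ℚ} (ht0 : t0 < 1)
    (hy : ∀ t : ℚ, t0 ≤ t → t < 1 → t • y ∈ convexHull ℚ (V : Set (Fin n → ℚ))) :
    y ∈ convexHull ℚ (V : Set (Fin n → ℚ)) := by
  classical
  -- the approach sequence
  set u : ℕ → ℚ := fun m => 1 - (1 - t0) / (m + 1) with hu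
  have hm1 : ∀ m : ℕ, (0:ℚ) < (m:ℚ) + 1 := fun m => by positivity
  have hut0 : ∀ m, t0 ≤ u m := by
    intro m
    have h1 : (1 - t0) / ((m:ℚ) + 1) ≤ 1 - t0 := by
      apply div_le_self (by linarith)
      have := Nat.cast_nonneg (α := ℚ) m
      linarith
    simp only [hu]; linarith
  have hu1 : ∀ m, u m < 1 := by
    intro m
    have : 0 < (1 - t0) / ((m:ℚ) + 1) := div_pos (by linarith) (hm1 m)
    simp only [hu]; linarith
  have humono : StrictMono u := by
    intro m m' hmm'
    have hc : (m:ℚ) + 1 < (m':ℚ) + 1 := by exact_mod_cast Nat.succ_lt_succ hmm'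
    simp only [hu, sub_lt_sub_iff_left]
    exact div_lt_div_of_pos_left (by linarith) (hm1 m) hc
  -- Caratheodory for each m
  have hcar : ∀ m : ℕ, ∃ W : Finset (Fin n → ℚ), ↑W ⊆ (V : Set (Fin n → ℚ)) ∧
      AffineIndependent ℚ ((↑) : W → (Fin n → ℚ)) ∧
      u m • y ∈ convexHull ℚ (W : Set (Fin n → ℚ)) := by
    intro m
    have := hy (u m) (hut0 m) (hu1 m)
    rw [convexHull_eq_union] at this
    simp only [Set.mem_iUnion] at this
    obtain ⟨W, hWV, hWai, hWm⟩ := this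
    exact ⟨W, hWV, hWai, hWm⟩
  choose W hWV hWai hWm using hcar
  -- pigeonhole
  have hWpow : ∀ m, W m ∈ V.powerset := by
    intro m
    rw [Finset.mem_powerset]
    intro x hx
    exact_mod_cast hWV m hx
  obtain ⟨W0, hW0⟩ := Finite.exists_infinite_fiber (fun m => (⟨W m, hWpow m⟩ : {S // S ∈ V.powerset}))
  set S : Set ℕ := {m | W m = W0.val} with hS
  have hSinf : S.Infinite := by
    rw [Set.infinite_coe_iff] at hW0
    apply Set.Infinite.mono ?_ hW0
    intro m hm
    simp only [Set.mem_preimage, Set.mem_singleton_iff] at hm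
    exact congrArg Subtype.val hm
  set K : Finset (Fin n → ℚ) := W0.val with hKdef
  obtain ⟨m0, hm0S⟩ := hSinf.nonempty
  have hWK0 : W m0 = K := hm0S
  have hKV : ↑K ⊆ (V : Set (Fin n → ℚ)) := by rw [← hWK0]; exact hWV m0
  have hKai : AffineIndependent ℚ ((↑) : K → (Fin n → ℚ)) := by rw [← hWK0]; exact hWai m0
  have hKm : ∀ m ∈ S, u m • y ∈ convexHull ℚ (K : Set (Fin n → ℚ)) := by
    intro m hm
    have hWK : W m = K := hm
    rw [← hWK]; exact hWm m
  -- weights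
  have hw : ∀ m : ℕ, ∃ w : (Fin n → ℚ) → ℚ, m ∈ S →
      (∀ x ∈ K, 0 ≤ w x) ∧ ∑ x ∈ K, w x = 1 ∧ ∑ x ∈ K, w x • x = u m • y := by
    intro m
    by_cases hm : m ∈ S
    · have := hKm m hm
      rw [Finset.convexHull_eq] at this
      obtain ⟨w, hw0, hw1, hwc⟩ := this
      refine ⟨w, fun _ => ⟨hw0, hw1, ?_⟩⟩
      have h := Finset.centerMass_eq_of_sum_1 K id hw1
      rw [h] at hwc
      simpa using hwc
    · exact ⟨fun _ => 0, fun h => absurd h hm⟩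
  choose w hwspec using hw
  -- two indices
  obtain ⟨m2, hm2S, hm2gt⟩ := hSinf.exists_gt m0
  set t1 : ℚ := u m0 with ht1
  set t2 : ℚ := u m2 with ht2
  have ht12 : t1 < t2 := humono hm2gt
  have htne : t2 - t1 ≠ 0 := by linarith
  set A : (Fin n → ℚ) → ℚ := w m0 with hA
  set Bw : (Fin n → ℚ) → ℚ := w m2 with hB
  obtain ⟨hA0, hA1, hAc⟩ := hwspec m0 hm0S
  obtain ⟨hB0, hB1, hBc⟩ := hwspec m2 hm2S
  rw [← hA] at hA0 hA1 hAc
  rw [← hB] at hB0 hB1 hBc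
  rw [← ht1] at hAc
  rw [← ht2] at hBc
  set L : (Fin n → ℚ) → ℚ → ℚ := fun x t => A x + (t - t1) / (t2 - t1) * (Bw x - A x) with hL
  have hLsum : ∀ t : ℚ, ∑ x ∈ K, L x t = 1 := by
    intro t
    simp only [hL]
    rw [Finset.sum_add_distrib, hA1, ← Finset.mul_sum]
    have : ∑ x ∈ K, (Bw x - A x) = 0 := by
      rw [Finset.sum_sub_distrib, hA1, hB1, sub_self]
    rw [this, mul_zero, add_zero]
  have hLcomb : ∀ t : ℚ, ∑ x ∈ K, L x t • x = t • y := by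
    intro t
    have hexp : ∀ x : Fin n → ℚ, L x t • x =
        A x • x + ((t - t1) / (t2 - t1)) • (Bw x • x) - ((t - t1) / (t2 - t1)) • (A x • x) := by
      intro x
      show (A x + (t - t1) / (t2 - t1) * (Bw x - A x)) • x = _
      rw [add_smul, mul_smul, sub_smul, smul_sub]
      abel
    rw [Finset.sum_congr rfl (fun x _ => hexp x), Finset.sum_sub_distrib,
      Finset.sum_add_distrib, ← Finset.smul_sum, ← Finset.smul_sum, hAc, hBc]
    rw [smul_smul, smul_smul, ← add_smul, ← sub_smul]
    congr 1
    field_simp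
    ring
  have hwL : ∀ m ∈ S, ∀ x ∈ K, w m x = L x (u m) := by
    intro m hm
    obtain ⟨h0', h1', hc'⟩ := hwspec m hm
    exact weights_unique hKai h1' (hLsum (u m)) (by rw [hc', hLcomb])
  have hL1 : ∀ x ∈ K, 0 ≤ L x 1 := by
    intro x hx
    by_contra hneg
    push_neg at hneg
    set sl : ℚ := (Bw x - A x) / (t2 - t1) with hsl
    have hdiff : ∀ t : ℚ, L x t = L x 1 - (1 - t) * sl := by
      intro t
      simp only [hL, hsl]
      field_simp
      ring
    set η : ℚ := (-(L x 1)) / (|sl| + 1) with hη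
    have hηpos : 0 < η := by
      apply div_pos (by linarith) (by positivity)
    obtain ⟨N, hN⟩ := exists_nat_gt ((1 - t0) / η)
    obtain ⟨m, hmS, hmN⟩ := hSinf.exists_gt N
    have hmub : 1 - u m < η := by
      have h2 : (1 - t0) / η < (m:ℚ) + 1 := by
        calc (1 - t0) / η < (N:ℚ) := hN
          _ ≤ (m:ℚ) := by exact_mod_cast hmN.le
          _ < (m:ℚ) + 1 := by linarith
      have h3 : 1 - t0 < η * ((m:ℚ) + 1) := by
        rw [div_lt_iff₀ hηpos] at h2
        linarith [h2]
      simp only [hu]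
      rw [sub_sub_cancel, div_lt_iff₀ (hm1 m)]
      linarith
    have hwm : 0 ≤ w m x := (hwspec m hmS).1 x hx
    have heq : w m x = L x 1 - (1 - u m) * sl := by rw [hwL m hmS x hx, hdiff]
    have habs : -((1 - u m) * sl) ≤ (1 - u m) * |sl| := by
      rw [← mul_neg]
      apply mul_le_mul_of_nonneg_left (neg_le_abs sl) (by linarith [hu1 m])
    have hfin : w m x < 0 := by
      have h5 : (1 - u m) * |sl| < η * (|sl| + 1) := by
        apply mul_lt_mul' hmub.le ?_ (abs_nonneg sl) hηpos
        · linarith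
      have h6 : η * (|sl| + 1) = -(L x 1) := by
        rw [hη, div_mul_cancel₀]
        positivity
      rw [heq]
      linarith
    linarith
  apply convexHull_mono hKV
  rw [Finset.convexHull_eq]
  refine ⟨fun x => L x 1, hL1, hLsum 1, ?_⟩
  rw [Finset.centerMass_eq_of_sum_1 _ id (hLsum 1)]
  have := hLcomb 1
  rw [one_smul] at this
  simpa using this


lemma right_constancy {n : ℕ} {P : Set (Fin n → ℚ)} (hP : IsRatPolytope P)
    (h0 : (0 : Fin n → ℚ) ∈ P) {r0 : ℚ} (hr0 : 0 ≤ r0) :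
    ∃ ε : ℚ, 0 < ε ∧ ε ≤ 1 ∧ ∀ s : ℚ, r0 ≤ s → s ≤ r0 + ε →
      {x | x ∈ s • P ∧ IsLatticePt x} = {x | x ∈ r0 • P ∧ IsLatticePt x} := by
  classical
  obtain ⟨M, hM0, hM⟩ := bounded_of_ratPolytope hP
  obtain ⟨V, hV⟩ := hP
  have hconv : Convex ℚ P := hV ▸ convex_convexHull ℚ _
  have hBfin : {x | x ∈ (r0 + 1) • P ∧ IsLatticePt x}.Finite := lattice_finite hM (r0 + 1)
  set T : Set (Fin n → ℚ) := {x | (x ∈ (r0 + 1) • P ∧ IsLatticePt x) ∧ x ∉ r0 • P} with hT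
  have hTfin : T.Finite := hBfin.subset (fun x hx => hx.1)
  have key : ∀ x ∈ T, ∃ ε : ℚ, 0 < ε ∧ x ∉ (r0 + ε) • P := by
    intro x hx
    by_contra hcon
    push_neg at hcon
    have hall : ∀ ε : ℚ, 0 < ε → x ∈ (r0 + ε) • P := fun ε hε => hcon ε hε
    apply hx.2
    rcases eq_or_lt_of_le hr0 with h00 | hr0pos
    · -- r0 = 0
      exfalso
      have hxne : x ≠ 0 := by
        intro hx0
        apply hx.2
        rw [hx0, ← h00]
        exact ⟨0, h0, by simp⟩
      obtain ⟨i, hi⟩ : ∃ i, x i ≠ 0 := by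
        by_contra hc
        push_neg at hc
        exact hxne (funext hc)
      obtain ⟨z, hz⟩ := hx.1.2 i
      have hz0 : z ≠ 0 := by rintro rfl; simp at hz; exact hi hz
      have h1le : (1:ℚ) ≤ |x i| := by
        rw [hz]
        have := Int.one_le_abs hz0
        calc (1:ℚ) ≤ (|z| : ℤ) := by exact_mod_cast this
          _ = |(z:ℚ)| := by push_cast; ring
      set ε : ℚ := 1 / (2 * (M + 1)) with hε
      have hεpos : 0 < ε := by positivity
      have hmem := hall ε hεpos
      rw [← h00, zero_add] at hmem
      obtain ⟨y, hy, rfl⟩ := hmem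
      have : |(ε • y) i| ≤ ε * M := by
        have h2 : (ε • y) i = ε * y i := rfl
        rw [h2, abs_mul, abs_of_pos hεpos]
        exact mul_le_mul_of_nonneg_left (hM y hy i) hεpos.le
      have hεM : ε * M < 1 := by
        rw [hε]
        rw [div_mul_eq_mul_div, one_mul, div_lt_one (by positivity)]
        linarith
      linarith
    · -- r0 > 0
      have hx' : x = r0 • (r0⁻¹ • x) := by
        rw [smul_inv_smul₀ (ne_of_gt hr0pos)]
      rw [hx', hV]
      apply Set.smul_mem_smul_set
      rw [← hV]
      have hray : ∀ t : ℚ, r0 / (r0 + 1) ≤ t → t < 1 → t • (r0⁻¹ • x) ∈ P := by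
        intro t ht0 ht1
        have htpos : 0 < t := lt_of_lt_of_le (div_pos hr0pos (by linarith)) ht0
        set s : ℚ := r0 / t with hs
        have hsr0 : r0 < s := by
          rw [hs, lt_div_iff₀ htpos]
          nlinarith
        have hmem := hall (s - r0) (by linarith)
        rw [add_sub_cancel] at hmem
        obtain ⟨z, hzP, hzx⟩ := hmem
        have : t • (r0⁻¹ • x) = z := by
          rw [← hzx, smul_smul, smul_smul]
          have hcoef : t * r0⁻¹ * s = 1 := by
            rw [hs]
            field_simp
          rw [hcoef, one_smul]
        rw [this]
        exact hzP
      have := mem_of_ray V (r0⁻¹ • x) (t0 := r0 / (r0 + 1))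
        (by rw [div_lt_one (by linarith)]; linarith)
        (fun t ht0 ht1 => by rw [← hV]; exact hray t ht0 ht1)
      rw [← hV] at this
      rw [hV] at this ⊢
      exact this
  -- choose epsilons
  set e : (Fin n → ℚ) → ℚ := fun x => if h : x ∈ T then (key x h).choose else 1 with he
  have hepos : ∀ x, 0 < e x := by
    intro x
    rw [he]
    by_cases h : x ∈ T
    · simp only [dif_pos h]; exact (key x h).choose_spec.1
    · simp only [dif_neg h]; norm_num
  have heout : ∀ x (h : x ∈ T), x ∉ (r0 + e x) • P := by
    intro x h
    rw [he]
    simp only [dif_pos h]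
    exact (key x h).choose_spec.2
  set F : Finset (Fin n → ℚ) := hTfin.toFinset with hF
  by_cases hFne : F.Nonempty
  · refine ⟨min 1 (F.inf' hFne e), ?_, min_le_left _ _, ?_⟩
    · apply lt_min one_pos
      rw [Finset.lt_inf'_iff]
      exact fun x _ => hepos x
    · intro s hs1 hs2
      apply Set.eq_of_subset_of_subset
      · rintro x ⟨hxs, hxl⟩
        refine ⟨?_, hxl⟩
        by_contra hxr0
        have hxT : x ∈ T := by
          refine ⟨⟨?_, hxl⟩, hxr0⟩
          exact mem_dilate_mono hconv h0 (hr0.trans hs1) (by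
            have : min 1 (F.inf' hFne e) ≤ 1 := min_le_left _ _
            linarith) hxs
        apply heout x hxT
        apply mem_dilate_mono hconv h0 (hr0.trans hs1) ?_ hxs
        have h1 : min 1 (F.inf' hFne e) ≤ e x := by
          apply le_trans (min_le_right _ _)
          exact Finset.inf'_le e (hTfin.mem_toFinset.mpr hxT)
        linarith
      · rintro x ⟨hxr, hxl⟩
        exact ⟨mem_dilate_mono hconv h0 hr0 hs1 hxr, hxl⟩
  · refine ⟨1, one_pos, le_refl _, ?_⟩
    intro s hs1 hs2
    apply Set.eq_of_subset_of_subset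
    · rintro x ⟨hxs, hxl⟩
      refine ⟨?_, hxl⟩
      by_contra hxr0
      have hxT : x ∈ T := ⟨⟨mem_dilate_mono hconv h0 (hr0.trans hs1) hs2 hxs, hxl⟩, hxr0⟩
      exact hFne ⟨x, hTfin.mem_toFinset.mpr hxT⟩
    · rintro x ⟨hxr, hxl⟩
      exact ⟨mem_dilate_mono hconv h0 hr0 hs1 hxr, hxl⟩


noncomputable def vdet (n : ℕ) (p : ℚ) : ℚ :=
  ∏ k : Fin (n+1), ∏ l ∈ Finset.Ioi k, (((l:ℕ):ℚ) * p - ((k:ℕ):ℚ) * p)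

lemma vdet_ne_zero (n : ℕ) {p : ℚ} (hp : 0 < p) : vdet n p ≠ 0 := by
  unfold vdet
  rw [Finset.prod_ne_zero_iff]
  intro k _
  rw [Finset.prod_ne_zero_iff]
  intro l hl
  have hkl : (k : Fin (n+1)) < l := Finset.mem_Ioi.mp hl
  have hq : ((k:ℕ):ℚ) < ((l:ℕ):ℚ) := by exact_mod_cast hkl
  have := mul_lt_mul_of_pos_right hq hp
  intro h
  rw [sub_eq_zero] at h
  linarith

lemma window {n : ℕ} {P : Set (Fin n → ℚ)} (hP : IsRatPolytope P)
    (h0 : (0 : Fin n → ℚ) ∈ P) {Q : ℕ → ℚ → ℚ} {p : ℚ} (hp : 0 < p)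
    (hper : ∀ j ≤ n, IsPeriodic (Q j) p)
    (hQ2 : ∀ r : ℚ, 0 ≤ r → (latticeCount P r : ℚ) = ∑ i ∈ Finset.range (n + 1), Q i r * r ^ i)
    {r0 : ℚ} (hr0 : 0 ≤ r0) :
    ∃ q : ℕ → Polynomial ℚ, ∃ ε : ℚ, 0 < ε ∧
      (∀ s : ℚ, 0 ≤ s → s ≤ ε → ∀ j, j ≤ n → vdet n p * Q j (r0 + s) = (q j).eval s) ∧
      (∀ i : ℕ, i < n →
        vdet n p * (((i:ℚ)+1) * Q (i+1) r0) = -((Polynomial.derivative (q i)).eval 0)) := by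
  classical
  -- constancy windows at the nodes
  have hwin : ∀ k : Fin (n+1), ∃ ε : ℚ, 0 < ε ∧ ∀ s : ℚ, 0 ≤ s → s ≤ ε →
      latticeCount P (r0 + (k:ℕ)*p + s) = latticeCount P (r0 + (k:ℕ)*p) := by
    intro k
    have hnn : 0 ≤ r0 + (k:ℕ)*p := by positivity
    obtain ⟨ε, hε, _, hcst⟩ := right_constancy hP h0 hnn
    refine ⟨ε, hε, fun s hs0 hsε => ?_⟩
    unfold latticeCount
    rw [hcst (r0 + (k:ℕ)*p + s) (by linarith) (by linarith)]
  choose εf hεf0 hεfc using hwin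
  have hne : (Finset.univ : Finset (Fin (n+1))).Nonempty := Finset.univ_nonempty
  set ε : ℚ := Finset.univ.inf' hne εf with hεdef
  have hεpos : 0 < ε := by
    rw [hεdef, Finset.lt_inf'_iff]
    exact fun k _ => hεf0 k
  have hεle : ∀ k, ε ≤ εf k := fun k => Finset.inf'_le εf (Finset.mem_univ k)
  -- matrix, cramer
  set v : Fin (n+1) → Polynomial ℚ := fun k => Polynomial.X + Polynomial.C (r0 + (k:ℕ)*p)
    with hv
  set M := Matrix.vandermonde v with hM
  set c : Fin (n+1) → ℚ := fun k => (latticeCount P (r0 + (k:ℕ)*p) : ℚ) with hc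
  set qf : Fin (n+1) → Polynomial ℚ := Matrix.cramer M (fun k => Polynomial.C (c k)) with hqf
  have hdet : M.det = Polynomial.C (vdet n p) := by
    rw [hM, Matrix.det_vandermonde]
    unfold vdet
    rw [map_prod]
    apply Finset.prod_congr rfl
    intro k _
    rw [map_prod]
    apply Finset.prod_congr rfl
    intro l _
    simp only [hv]
    rw [add_sub_add_left_eq_sub, ← map_sub]
    congr 1
    ring
  have hcram := Matrix.mulVec_cramer M (fun k => Polynomial.C (c k))
  have hMq : M.mulVec qf = fun k => Polynomial.C (vdet n p * c k) := by
    rw [hqf, hcram, hdet]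
    funext k
    simp [smul_eq_mul, ← map_mul]
  -- the count equations
  have hQeq : ∀ s : ℚ, 0 ≤ s → s ≤ ε → ∀ k : Fin (n+1),
      ∑ j : Fin (n+1), (s + (r0 + (k:ℕ)*p))^(j:ℕ) * (vdet n p * Q (j:ℕ) (r0 + s))
        = vdet n p * c k := by
    intro s hs0 hsε k
    have hcount : (latticeCount P (r0 + (k:ℕ)*p + s) : ℚ) = c k := by
      have h := hεfc k s hs0 (hsε.trans (hεle k))
      show (latticeCount P (r0 + (k:ℕ)*p + s) : ℚ) = ((latticeCount P (r0 + (k:ℕ)*p)) : ℚ)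
      exact_mod_cast h
    have hsum := hQ2 (r0 + (k:ℕ)*p + s) (by positivity)
    have hQshift : ∀ i ∈ Finset.range (n+1),
        Q i (r0 + (k:ℕ)*p + s) * (r0 + (k:ℕ)*p + s)^i
          = Q i (r0 + s) * (s + (r0 + (k:ℕ)*p))^i := by
      intro i hi
      have hper' := periodic_nat_mul (hper i (Nat.lt_succ_iff.mp (Finset.mem_range.mp hi)))
        (k : ℕ) (r0 + s)
      have harg : r0 + (k:ℕ)*p + s = (r0 + s) + (k:ℕ)*p := by ring
      rw [harg, hper']
      congr 1
      ring
    rw [Finset.sum_congr rfl hQshift] at hsum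
    rw [← Fin.sum_univ_eq_sum_range (fun i => Q i (r0 + s) * (s + (r0 + (k:ℕ)*p))^i)] at hsum
    calc ∑ j : Fin (n+1), (s + (r0 + (k:ℕ)*p))^(j:ℕ) * (vdet n p * Q (j:ℕ) (r0 + s))
        = vdet n p * ∑ j : Fin (n+1), Q (j:ℕ) (r0 + s) * (s + (r0 + (k:ℕ)*p))^(j:ℕ) := by
          rw [Finset.mul_sum]
          apply Finset.sum_congr rfl
          intro j _
          ring
      _ = vdet n p * (latticeCount P (r0 + (k:ℕ)*p + s) : ℚ) := by rw [← hsum]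
      _ = vdet n p * c k := by rw [hcount]
  -- identification of coefficients on the window
  have hwinid : ∀ s : ℚ, 0 ≤ s → s ≤ ε →
      (fun j : Fin (n+1) => vdet n p * Q (j:ℕ) (r0 + s)) = fun j => (qf j).eval s := by
    intro s hs0 hsε
    set Ms : Matrix (Fin (n+1)) (Fin (n+1)) ℚ :=
      Matrix.vandermonde (fun k => s + (r0 + (k:ℕ)*p)) with hMs
    have hdets : Ms.det = vdet n p := by
      rw [hMs, Matrix.det_vandermonde]
      unfold vdet
      apply Finset.prod_congr rfl
      intro k _
      apply Finset.prod_congr rfl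
      intro l _
      ring
    have hinv : Invertible Ms :=
      Ms.invertibleOfIsUnitDet (by rw [hdets]; exact isUnit_iff_ne_zero.mpr (vdet_ne_zero n hp))
    have hinj := Ms.mulVec_injective_of_invertible
    apply hinj
    have h1 : Ms.mulVec (fun j => vdet n p * Q (j:ℕ) (r0 + s)) = fun k => vdet n p * c k := by
      funext k
      simp only [Matrix.mulVec, dotProduct, hMs, Matrix.vandermonde, Matrix.of_apply]
      exact hQeq s hs0 hsε k
    have h2 : Ms.mulVec (fun j => (qf j).eval s) = fun k => vdet n p * c k := by
      funext k
      have h3 : ((M.mulVec qf) k).eval s = (Ms.mulVec (fun j => (qf j).eval s)) k := by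
        simp [Matrix.mulVec, dotProduct, hM, Matrix.vandermonde, hMs, hv,
          Polynomial.eval_finset_sum]
      rw [← h3, hMq]
      simp
    rw [h1, h2]
  -- the ℕ-indexed polynomials
  set q : ℕ → Polynomial ℚ := fun j => if h : j < n + 1 then qf ⟨j, h⟩ else 0 with hq
  have hqeval : ∀ s : ℚ, 0 ≤ s → s ≤ ε → ∀ j, j ≤ n →
      vdet n p * Q j (r0 + s) = (q j).eval s := by
    intro s hs0 hsε j hj
    have hlt : j < n + 1 := Nat.lt_succ_of_le hj
    have := congrFun (hwinid s hs0 hsε) ⟨j, hlt⟩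
    simpa [hq, dif_pos hlt, hj] using this
  refine ⟨q, ε, hεpos, hqeval, ?_⟩
  -- derivative relation
  intro i hi
  have hd0 : ∀ k : Fin (n+1),
      ∑ j : Fin (n+1), (((j:ℕ):ℚ) * (r0 + (k:ℕ)*p)^((j:ℕ)-1) * ((qf j).eval 0)
        + (r0 + (k:ℕ)*p)^(j:ℕ) * ((Polynomial.derivative (qf j)).eval 0)) = 0 := by
    intro k
    have h1 : Polynomial.derivative ((M.mulVec qf) k) = 0 := by
      rw [hMq]
      simp
    have h2 : (M.mulVec qf) k = ∑ j : Fin (n+1), (v k)^(j:ℕ) * qf j := by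
      simp [Matrix.mulVec, dotProduct, hM, Matrix.vandermonde]
    rw [h2] at h1
    have h3 := congrArg (Polynomial.eval 0) h1
    rw [Polynomial.derivative_sum] at h3
    rw [Polynomial.eval_finset_sum] at h3
    simp only [Polynomial.derivative_mul, Polynomial.derivative_pow, hv,
      Polynomial.derivative_X_add_C, Polynomial.eval_add, Polynomial.eval_mul,
      Polynomial.eval_pow, Polynomial.eval_natCast, Polynomial.eval_X, Polynomial.eval_C,
      Polynomial.eval_zero, zero_add, mul_one, Polynomial.eval_one] at h3
    exact h3
  -- build the auxiliary polynomial ψ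
  set a : ℕ → ℚ := fun j => (q j).eval 0 with ha
  set b : ℕ → ℚ := fun j => ((Polynomial.derivative (q j)).eval 0) with hb
  set ψ : Polynomial ℚ := (∑ j ∈ Finset.range (n+1), Polynomial.monomial j (b j))
    + Polynomial.derivative (∑ j ∈ Finset.range (n+1), Polynomial.monomial j (a j)) with hψ
  have hψeval : ∀ k : Fin (n+1), ψ.eval (r0 + (k:ℕ)*p) = 0 := by
    intro k
    rw [hψ]
    rw [Polynomial.eval_add, Polynomial.eval_finset_sum, Polynomial.derivative_sum,
      Polynomial.eval_finset_sum]
    simp only [Polynomial.eval_monomial, Polynomial.derivative_monomial, Polynomial.eval_monomial]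
    have hsplit := hd0 k
    rw [Finset.sum_add_distrib] at hsplit
    rw [← Fin.sum_univ_eq_sum_range (fun j => b j * (r0 + (k:ℕ)*p)^j),
      ← Fin.sum_univ_eq_sum_range (fun j => a j * (j:ℚ) * (r0 + (k:ℕ)*p)^(j-1))]
    have e1 : ∑ j : Fin (n+1), b (j:ℕ) * (r0 + (k:ℕ)*p)^(j:ℕ)
        = ∑ j : Fin (n+1), (r0 + (k:ℕ)*p)^(j:ℕ) * ((Polynomial.derivative (qf j)).eval 0) := by
      apply Finset.sum_congr rfl
      intro j _
      have : q (j:ℕ) = qf j := by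
        rw [hq]
        simp [dif_pos j.isLt, Nat.not_lt.mpr j.is_le]
      simp only [hb]
      rw [this]
      ring
    have e2 : ∑ j : Fin (n+1), a (j:ℕ) * ((j:ℕ):ℚ) * (r0 + (k:ℕ)*p)^((j:ℕ)-1)
        = ∑ j : Fin (n+1), ((j:ℕ):ℚ) * (r0 + (k:ℕ)*p)^((j:ℕ)-1) * ((qf j).eval 0) := by
      apply Finset.sum_congr rfl
      intro j _
      have : q (j:ℕ) = qf j := by
        rw [hq]
        simp [dif_pos j.isLt, Nat.not_lt.mpr j.is_le]
      simp only [ha]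
      rw [this]
      ring
    rw [e1, e2]
    linarith [hsplit]
  have hψdeg : ψ.natDegree ≤ n := by
    rw [hψ]
    apply le_trans (Polynomial.natDegree_add_le _ _)
    apply max_le
    · apply Polynomial.natDegree_sum_le_of_forall_le
      intro j hj
      exact le_trans (Polynomial.natDegree_monomial_le _)
        (Nat.lt_succ_iff.mp (Finset.mem_range.mp hj))
    · apply le_trans (Polynomial.natDegree_derivative_le _)
      apply le_trans (Nat.sub_le _ 1)
      apply Polynomial.natDegree_sum_le_of_forall_le
      intro j hj
      exact le_trans (Polynomial.natDegree_monomial_le _)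
        (Nat.lt_succ_iff.mp (Finset.mem_range.mp hj))
  have hnodes : Function.Injective (fun k : Fin (n+1) => r0 + (k:ℕ)*p) := by
    intro k l h
    simp only at h
    have : ((k:ℕ):ℚ) * p = ((l:ℕ):ℚ) * p := by linarith
    have h2 : ((k:ℕ):ℚ) = ((l:ℕ):ℚ) := mul_right_cancel₀ (ne_of_gt hp) this
    have h3 : (k:ℕ) = (l:ℕ) := by exact_mod_cast h2
    exact Fin.ext h3
  have hψ0 : ψ = 0 := by
    apply Polynomial.eq_zero_of_natDegree_lt_card_of_eval_eq_zero ψ hnodes hψeval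
    rw [Fintype.card_fin]
    omega
  -- extract the coefficient
  have hco : ψ.coeff i = 0 := by rw [hψ0]; simp
  rw [hψ] at hco
  rw [Polynomial.coeff_add, Polynomial.coeff_derivative] at hco
  rw [Polynomial.finset_sum_coeff, Polynomial.finset_sum_coeff] at hco
  simp only [Polynomial.coeff_monomial] at hco
  rw [Finset.sum_ite_eq' (Finset.range (n+1)) i b] at hco
  rw [Finset.sum_ite_eq' (Finset.range (n+1)) (i+1) a] at hco
  rw [if_pos (Finset.mem_range.mpr (by omega)), if_pos (Finset.mem_range.mpr (by omega))] at hco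
  -- hco : b i + a (i+1) * ((i+1 : ℚ)) = 0
  have hval : a (i+1) = vdet n p * Q (i+1) r0 := by
    have := hqeval 0 (le_refl 0) hεpos.le (i+1) (by omega)
    rw [add_zero] at this
    simp only [ha]
    exact this.symm
  have hbval : b i = (Polynomial.derivative (q i)).eval 0 := rfl
  rw [hval, hbval] at hco
  push_cast at hco
  linarith [hco]


lemma periodic_neg {f : ℚ → ℚ} {d : ℚ} (h : IsPeriodic f d) : IsPeriodic f (-d) := by
  intro r
  have := h (r - d)
  rw [sub_add_cancel] at this
  rw [← sub_eq_add_neg]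
  exact this.symm

lemma interval_infinite {ε : ℚ} (hε : 0 < ε) : {s : ℚ | 0 ≤ s ∧ s ≤ ε}.Infinite := by
  apply Set.infinite_of_injective_forall_mem (f := fun m : ℕ => ε / ((m:ℚ) + 1))
  · intro m m' h
    simp only at h
    rw [div_eq_div_iff (by positivity) (by positivity)] at h
    have h2 : ((m':ℚ)) + 1 = (m:ℚ) + 1 := mul_left_cancel₀ (ne_of_gt hε) h
    have h3 : (m:ℚ) = (m':ℚ) := by linarith
    exact_mod_cast h3
  · intro m
    constructor
    · positivity
    · apply div_le_self hε.le
      have := Nat.cast_nonneg (α := ℚ) m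
      linarith


end Stmt19Aux

open Stmt19Aux

/-- for a full-dimensional rational polytope containing the origin,
every period of `Q_i(P,·)` is a period of `Q_{i+1}(P,·)`, so the minimal periods are
weakly decreasing in `i`. -/
theorem stmt19 {n : ℕ} (P : Set (Fin n → ℚ)) (hP : IsRatPolytope P)
    (hdim : polyDim P = n) (h0 : (0 : Fin n → ℚ) ∈ P)
    (Q : ℕ → ℚ → ℚ) (hQ : IsRatEhrhartCoeffs P n Q) :
    ∀ i < n, ∀ d : ℚ, IsPeriodic (Q i) d → IsPeriodic (Q (i + 1)) d := by
  intro i hi d hd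
  obtain ⟨hQ1, hQ2⟩ := hQ
  obtain ⟨p, hp, hper⟩ := common_period hQ1 n
  have hδ : vdet n p ≠ 0 := vdet_ne_zero n hp
  have pos_case : ∀ d' : ℚ, 0 < d' → IsPeriodic (Q i) d' → IsPeriodic (Q (i + 1)) d' := by
    intro d' hdpos hdper
    have main : ∀ r0 : ℚ, 0 ≤ r0 → Q (i+1) (r0 + d') = Q (i+1) r0 := by
      intro r0 hr0
      obtain ⟨q1, ε1, hε1, hw1, hder1⟩ := window hP h0 hp hper hQ2 hr0
      obtain ⟨q2, ε2, hε2, hw2, hder2⟩ := window hP h0 hp hper hQ2 (r0 := r0 + d')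
        (by linarith)
      have hpoly : q1 i = q2 i := by
        have hroots : {s : ℚ | 0 ≤ s ∧ s ≤ min ε1 ε2} ⊆ {s | (q1 i - q2 i).IsRoot s} := by
          rintro s ⟨hs0, hsm⟩
          have h1 := hw1 s hs0 (le_trans hsm (min_le_left _ _)) i (le_of_lt hi)
          have h2 := hw2 s hs0 (le_trans hsm (min_le_right _ _)) i (le_of_lt hi)
          have harg : r0 + d' + s = (r0 + s) + d' := by ring
          rw [harg, hdper (r0 + s)] at h2
          simp only [Polynomial.IsRoot, Polynomial.eval_sub, Set.mem_setOf_eq]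
          rw [← h1, ← h2]
          ring
        have hzero : q1 i - q2 i = 0 := by
          apply Polynomial.eq_zero_of_infinite_isRoot
          exact Set.Infinite.mono hroots (interval_infinite (lt_min hε1 hε2))
        exact sub_eq_zero.mp hzero
      have h1 := hder1 i hi
      have h2 := hder2 i hi
      rw [hpoly] at h1
      have h3 : vdet n p * (((i:ℚ)+1) * Q (i+1) r0)
          = vdet n p * (((i:ℚ)+1) * Q (i+1) (r0 + d')) := by rw [h1, h2]
      have h4 := mul_left_cancel₀ hδ h3
      have h5 := mul_left_cancel₀ (by positivity : ((i:ℚ)+1) ≠ 0) h4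
      exact h5.symm
    intro r
    obtain ⟨m, hm⟩ := exists_nat_gt (-r / p)
    have hper' := hper (i+1) (by omega)
    have hrm : 0 ≤ r + (m:ℚ) * p := by
      rw [div_lt_iff₀ hp] at hm
      linarith
    have e1 : Q (i+1) (r + d') = Q (i+1) ((r + d') + (m:ℚ) * p) :=
      (periodic_nat_mul hper' m (r + d')).symm
    have e2 : Q (i+1) r = Q (i+1) (r + (m:ℚ) * p) :=
      (periodic_nat_mul hper' m r).symm
    rw [e1, e2]
    have harg : (r + d') + (m:ℚ) * p = (r + (m:ℚ) * p) + d' := by ring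
    rw [harg]
    exact main (r + (m:ℚ) * p) hrm
  rcases lt_trichotomy d 0 with hneg | hzero | hpos
  · have h1 : IsPeriodic (Q i) (-d) := periodic_neg hd
    have h2 : IsPeriodic (Q (i+1)) (-d) := pos_case (-d) (by linarith) h1
    have h3 := periodic_neg h2
    rwa [neg_neg] at h3
  · subst hzero
    intro r
    rw [add_zero]
  · exact pos_case d hpos hd
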